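/- Let m ≥ n, let G ∈ ℝ^{m×n} be nonzero, let S ∈ ℝ^{n×n} be diagonal with strictly positive diagonal entries, and let λ > 0. Then the functional F(ΔW) = ⟨G, ΔW⟩_F + (λ/2)·‖ΔW·S^{−1}‖₂² over ΔW ∈ ℝ^{m×n} has a unique global minimizer if and only if G has full column rank n. -/

import Mathlib

open Matrix
open scoped Matrix.Norms.L2Operator

/-- The spectral norm (`ℓ2 → ℓ2` operator norm) of a real matrix, i.e. its largest
singular value.  This is Mathlib's scoped L2 operator norm on matrices. -/
noncomputable def matrixSpectralNorm {m n : ℕ} (M : Matrix (Fin m) (Fin n) ℝ) : ℝ := ‖M‖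

open Classical in
/-- The unique symmetric positive semidefinite square root of a positive semidefinite
real matrix (junk value `0` if the input is not positive semidefinite). -/
noncomputable def matrixSqrt {n : ℕ} (A : Matrix (Fin n) (Fin n) ℝ) :
    Matrix (Fin n) (Fin n) ℝ :=
  if h : A.PosSemidef then
    (h.1.eigenvectorUnitary : Matrix (Fin n) (Fin n) ℝ) *
      diagonal (RCLike.ofReal ∘ Real.sqrt ∘ h.1.eigenvalues) *
      (star h.1.eigenvectorUnitary : Matrix (Fin n) (Fin n) ℝ)
  else 0

/-- The polar factor `X (XᵀX)^{-1/2}` of a matrix `X` with full column rank. -/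
noncomputable def polarFactor {m n : ℕ} (X : Matrix (Fin m) (Fin n) ℝ) :
    Matrix (Fin m) (Fin n) ℝ :=
  X * (matrixSqrt (Xᵀ * X))⁻¹

/-- The Frobenius inner product `⟨A, B⟩_F = tr(Aᵀ B)`. -/
noncomputable def frobInner {m n : ℕ} (A B : Matrix (Fin m) (Fin n) ℝ) : ℝ :=
  (Aᵀ * B).trace

section Helpers

open scoped RealInnerProductSpace

namespace SpecAux

variable {m n : ℕ}

noncomputable def mv (A : Matrix (Fin m) (Fin n) ℝ) (x : EuclideanSpace ℝ (Fin n)) :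
    EuclideanSpace ℝ (Fin m) :=
  (WithLp.equiv 2 _).symm (A *ᵥ (WithLp.equiv 2 _ x))

lemma mv_apply (A : Matrix (Fin m) (Fin n) ℝ) (x : EuclideanSpace ℝ (Fin n)) (a : Fin m) :
    mv A x a = ∑ b, A a b * x b := rfl

lemma inner_eq (x y : EuclideanSpace ℝ (Fin m)) : ⟪x, y⟫ = ∑ i, x i * y i := by
  simp [PiLp.inner_apply, RCLike.inner_apply, starRingEnd_apply, mul_comm]

lemma mv_eq_toEuclideanLin (A : Matrix (Fin m) (Fin n) ℝ) (x : EuclideanSpace ℝ (Fin n)) :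
    mv A x = Matrix.toEuclideanLin A x := rfl

lemma mv_zero (x : EuclideanSpace ℝ (Fin n)) :
    mv (0 : Matrix (Fin m) (Fin n) ℝ) x = 0 := by
  rw [mv_eq_toEuclideanLin, map_zero]; rfl

lemma mv_add (A B : Matrix (Fin m) (Fin n) ℝ) (x : EuclideanSpace ℝ (Fin n)) :
    mv (A + B) x = mv A x + mv B x := by
  rw [mv_eq_toEuclideanLin, mv_eq_toEuclideanLin, mv_eq_toEuclideanLin, map_add,
    LinearMap.add_apply]

lemma mv_smul (c : ℝ) (A : Matrix (Fin m) (Fin n) ℝ) (x : EuclideanSpace ℝ (Fin n)) :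
    mv (c • A) x = c • mv A x := by
  rw [mv_eq_toEuclideanLin, mv_eq_toEuclideanLin, _root_.map_smul, LinearMap.smul_apply]

lemma mv_sum {ι : Type*} (s : Finset ι) (A : ι → Matrix (Fin m) (Fin n) ℝ)
    (x : EuclideanSpace ℝ (Fin n)) : mv (∑ i ∈ s, A i) x = ∑ i ∈ s, mv (A i) x := by
  simp only [mv_eq_toEuclideanLin, map_sum, LinearMap.sum_apply]

lemma matrix_ext_of_mv_basis {A B : Matrix (Fin m) (Fin n) ℝ}
    (v : OrthonormalBasis (Fin n) ℝ (EuclideanSpace ℝ (Fin n)))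
    (h : ∀ i, mv A (v i) = mv B (v i)) : A = B := by
  have : Matrix.toEuclideanLin A = Matrix.toEuclideanLin B := by
    refine Module.Basis.ext v.toBasis (fun i => ?_)
    rw [OrthonormalBasis.coe_toBasis]
    rw [← mv_eq_toEuclideanLin, ← mv_eq_toEuclideanLin]
    exact h i
  exact Matrix.toEuclideanLin.injective this

lemma inner_mv_left (A : Matrix (Fin m) (Fin n) ℝ) (x : EuclideanSpace ℝ (Fin n))
    (y : EuclideanSpace ℝ (Fin m)) : ⟪mv A x, y⟫ = ⟪x, mv Aᵀ y⟫ := by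
  simp only [inner_eq, mv_apply, Finset.sum_mul, Finset.mul_sum]
  rw [Finset.sum_comm]
  exact Finset.sum_congr rfl fun b _ => Finset.sum_congr rfl fun a _ => by
    rw [Matrix.transpose_apply]; ring

lemma mv_mv (A : Matrix (Fin n) (Fin m) ℝ) (B : Matrix (Fin m) (Fin n) ℝ)
    (x : EuclideanSpace ℝ (Fin n)) : mv A (mv B x) = mv (A * B) x := by
  show (WithLp.equiv 2 _).symm (A *ᵥ (B *ᵥ (WithLp.equiv 2 _ x))) = _
  rw [Matrix.mulVec_mulVec]
  rfl

lemma mv_norm_le (A : Matrix (Fin m) (Fin n) ℝ) (x : EuclideanSpace ℝ (Fin n)) :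
    ‖mv A x‖ ≤ ‖A‖ * ‖x‖ := A.l2_opNorm_mulVec x

lemma opNorm_le_of_forall {A : Matrix (Fin m) (Fin n) ℝ} {c : ℝ} (hc : 0 ≤ c)
    (h : ∀ x, ‖mv A x‖ ≤ c * ‖x‖) : ‖A‖ ≤ c := by
  rw [Matrix.l2_opNorm_def]
  exact ContinuousLinearMap.opNorm_le_bound _ hc (fun x => by
    simpa [Matrix.toEuclideanLin_apply, mv] using h x)

lemma dual_orthonormal {k : ℕ} (v : OrthonormalBasis (Fin k) ℝ (EuclideanSpace ℝ (Fin k)))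
    (b c : Fin k) : ∑ i, v i b * v i c = if b = c then 1 else 0 := by
  classical
  set P : Matrix (Fin k) (Fin k) ℝ := Matrix.of (fun a i => v i a) with hP
  have h1 : Pᵀ * P = 1 := by
    ext i j
    have := (orthonormal_iff_ite (𝕜 := ℝ)).mp v.orthonormal i j
    rw [inner_eq] at this
    simp only [Matrix.mul_apply, Matrix.transpose_apply, Matrix.one_apply, hP, Matrix.of_apply]
    simpa using this
  have h2 : P * Pᵀ = 1 := mul_eq_one_comm.mp h1
  have := congrFun (congrFun h2 b) c
  simp only [Matrix.mul_apply, Matrix.transpose_apply, Matrix.one_apply, hP, Matrix.of_apply] at this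
  simpa using this

lemma trace_eq_sum_inner {k : ℕ} (M : Matrix (Fin k) (Fin k) ℝ)
    (v : OrthonormalBasis (Fin k) ℝ (EuclideanSpace ℝ (Fin k))) :
    M.trace = ∑ i, ⟪(v i : EuclideanSpace ℝ (Fin k)), mv M (v i)⟫ := by
  classical
  have : ∀ i, ⟪(v i : EuclideanSpace ℝ (Fin k)), mv M (v i)⟫
      = ∑ b, ∑ c, M b c * (v i b * v i c) := by
    intro i
    rw [inner_eq]
    refine Finset.sum_congr rfl fun b _ => ?_
    rw [mv_apply, Finset.mul_sum]
    refine Finset.sum_congr rfl fun c _ => by ring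
  simp only [this]
  rw [Finset.sum_comm]
  have : ∀ b, ∑ i, ∑ c, M b c * (v i b * v i c) = M b b := by
    intro b
    rw [Finset.sum_comm]
    have : ∀ c, ∑ i, M b c * (v i b * v i c) = M b c * (if b = c then 1 else 0) := by
      intro c
      rw [← Finset.mul_sum, dual_orthonormal]
    simp only [this, mul_ite, mul_one, mul_zero]
    simp
  simp only [this]
  rfl

lemma frob_eq_sum_inner (H B : Matrix (Fin m) (Fin n) ℝ)
    (v : OrthonormalBasis (Fin n) ℝ (EuclideanSpace ℝ (Fin n))) :
    (Hᵀ * B).trace = ∑ i, ⟪mv H (v i), mv B (v i)⟫ := by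
  rw [trace_eq_sum_inner (Hᵀ * B) v]
  refine Finset.sum_congr rfl fun i _ => ?_
  rw [← mv_mv, ← inner_mv_left]

lemma parseval {k : ℕ} (v : OrthonormalBasis (Fin k) ℝ (EuclideanSpace ℝ (Fin k)))
    (x : EuclideanSpace ℝ (Fin k)) :
    ∑ i, ⟪(v i : EuclideanSpace ℝ (Fin k)), x⟫ ^ 2 = ‖x‖ ^ 2 := by
  have := v.sum_inner_mul_inner x x
  rw [← real_inner_self_eq_norm_sq]
  rw [← this]
  refine Finset.sum_congr rfl fun i _ => ?_
  rw [real_inner_comm x (v i), sq]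

/-- Spectral data for `Hᵀ * H`. -/
lemma exists_spectral_data (H : Matrix (Fin m) (Fin n) ℝ) :
    ∃ (v : OrthonormalBasis (Fin n) ℝ (EuclideanSpace ℝ (Fin n))) (μ : Fin n → ℝ),
      (∀ i, 0 ≤ μ i) ∧ (∀ i, mv (Hᵀ * H) (v i) = μ i • v i) ∧
      H.rank = Fintype.card {i // μ i ≠ 0} := by
  classical
  have hct : Hᴴ = Hᵀ := by
    ext a b; simp [Matrix.conjTranspose_apply]
  have hherm : (Hᵀ * H).IsHermitian := by
    have := Matrix.isHermitian_conjTranspose_mul_self H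
    rwa [hct] at this
  refine ⟨hherm.eigenvectorBasis, hherm.eigenvalues, ?_, ?_, ?_⟩
  · intro i
    have := Matrix.eigenvalues_conjTranspose_mul_self_nonneg H i
    convert this using 2
    rw [hct]
  · intro i
    have h := hherm.mulVec_eigenvectorBasis i
    ext a
    have := congrFun h a
    simpa [mv_apply, Matrix.mulVec, dotProduct] using this
  · have h1 : (Hᵀ * H).rank = H.rank := Matrix.rank_transpose_mul_self H
    have h2 := hherm.rank_eq_card_non_zero_eigs
    rw [← h1, h2]

end SpecAux

end Helpers

set_option maxHeartbeats 2000000 in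
open scoped RealInnerProductSpace in
theorem SpecAux.core {m n : ℕ} (hmn : n ≤ m) (H : Matrix (Fin m) (Fin n) ℝ)
    (hH0 : H ≠ 0) (lam : ℝ) (hlam : 0 < lam) :
    (∃! V : Matrix (Fin m) (Fin n) ℝ, ∀ V' : Matrix (Fin m) (Fin n) ℝ,
        frobInner H V + lam / 2 * matrixSpectralNorm V ^ 2 ≤
          frobInner H V' + lam / 2 * matrixSpectralNorm V' ^ 2) ↔
      H.rank = n := by
  classical
  obtain ⟨v, μ, hμ0, hmvA, hrank⟩ := exists_spectral_data H
  set σ : Fin n → ℝ := fun i => Real.sqrt (μ i) with hσdef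
  have hσ0 : ∀ i, 0 ≤ σ i := fun i => Real.sqrt_nonneg _
  have hσsq : ∀ i, σ i ^ 2 = μ i := fun i => Real.sq_sqrt (hμ0 i)
  have hnv : ∀ i, ‖(v i : EuclideanSpace ℝ (Fin n))‖ = 1 := fun i => v.orthonormal.1 i
  have hvv : ∀ i j, ⟪(v i : EuclideanSpace ℝ (Fin n)), v j⟫ = if i = j then 1 else 0 :=
    (orthonormal_iff_ite (𝕜 := ℝ)).mp v.orthonormal
  have hinner_Hv : ∀ i j, ⟪mv H (v i), mv H (v j)⟫ = if i = j then μ j else 0 := by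
    intro i j
    rw [inner_mv_left, mv_mv, hmvA j, real_inner_smul_right, hvv]
    by_cases h : i = j <;> simp [h]
  have hHv_norm : ∀ i, ‖mv H (v i)‖ = σ i := by
    intro i
    have h1 : ‖mv H (v i)‖ ^ 2 = μ i := by
      rw [← real_inner_self_eq_norm_sq, hinner_Hv i i]; simp
    rw [← Real.sqrt_sq (norm_nonneg _), h1]
  have hHv0 : ∀ i, μ i = 0 → mv H (v i) = 0 := by
    intro i h
    have h2 := hinner_Hv i i
    simp only [if_pos rfl, h] at h2
    exact inner_self_eq_zero.mp h2
  set u : Fin n → EuclideanSpace ℝ (Fin m) := fun i => (σ i)⁻¹ • mv H (v i) with hu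
  have hHvu : ∀ i, mv H (v i) = σ i • u i := by
    intro i
    by_cases h : μ i = 0
    · rw [hHv0 i h]; simp [hu, hHv0 i h]
    · have hσne : σ i ≠ 0 := by
        rw [hσdef]; exact Real.sqrt_ne_zero'.mpr ((hμ0 i).lt_of_ne (Ne.symm h))
      rw [hu]; simp only; rw [smul_inv_smul₀ hσne]
  set e : Fin n → ℝ := fun i => if μ i = 0 then 0 else 1 with he
  have huu : ∀ i j, ⟪u i, u j⟫ = if i = j then e i else 0 := by
    intro i j
    rw [hu]; simp only
    rw [real_inner_smul_left, real_inner_smul_right, hinner_Hv]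
    by_cases hij : i = j
    · subst hij
      simp only [if_pos rfl, he]
      by_cases h : μ i = 0
      · simp [h]
      · have hpos : 0 < μ i := (hμ0 i).lt_of_ne (Ne.symm h)
        have hσne : σ i ≠ 0 := by
          rw [hσdef]; exact Real.sqrt_ne_zero'.mpr hpos
        rw [if_neg h]
        field_simp
        rw [← hσsq i]; simp
    · simp [hij]
  have hue : ∀ i, ‖u i‖ ^ 2 = e i := fun i => by
    rw [← real_inner_self_eq_norm_sq, huu]; simp
  have he01 : ∀ i, e i = 0 ∨ e i = 1 := fun i => by
    by_cases h : μ i = 0 <;> simp [he, h]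
  have hσe : ∀ i, σ i * e i = σ i := by
    intro i
    by_cases h : μ i = 0
    · have : σ i = 0 := by rw [hσdef]; simp [h]
      simp [this]
    · simp [he, h]
  set ν : ℝ := ∑ i, σ i with hν
  have hex : ∃ i, μ i ≠ 0 := by
    by_contra hco
    push_neg at hco
    apply hH0
    refine matrix_ext_of_mv_basis v (fun i => ?_)
    rw [hHv0 i (hco i), mv_zero]
  obtain ⟨i₀, hi₀⟩ := hex
  have hνpos : 0 < ν := by
    have h1 : 0 < σ i₀ := Real.sqrt_pos.mpr ((hμ0 i₀).lt_of_ne (Ne.symm hi₀))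
    calc (0:ℝ) < σ i₀ := h1
      _ ≤ ν := Finset.single_le_sum (fun i _ => hσ0 i) (Finset.mem_univ i₀)
  set t : ℝ := ν / lam with htdef
  have htpos : 0 < t := div_pos hνpos hlam
  have hνt : ν = lam * t := by rw [htdef]; field_simp
  set f : Matrix (Fin m) (Fin n) ℝ → ℝ :=
    fun B => frobInner H B + lam / 2 * matrixSpectralNorm B ^ 2 with hf
  have hterm : ∀ (B : Matrix (Fin m) (Fin n) ℝ) i,
      -(σ i * ‖B‖) ≤ ⟪mv H (v i), mv B (v i)⟫ := by
    intro B i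
    have h1 : |⟪mv H (v i), mv B (v i)⟫| ≤ ‖mv H (v i)‖ * ‖mv B (v i)‖ :=
      abs_real_inner_le_norm _ _
    have h2 : ‖mv B (v i)‖ ≤ ‖B‖ := by
      have := mv_norm_le B (v i); rwa [hnv i, mul_one] at this
    have h3 : ‖mv H (v i)‖ * ‖mv B (v i)‖ ≤ σ i * ‖B‖ := by
      rw [hHv_norm i]; exact mul_le_mul_of_nonneg_left h2 (hσ0 i)
    have h4 := neg_abs_le ⟪mv H (v i), mv B (v i)⟫
    linarith
  have hfrob_low : ∀ B : Matrix (Fin m) (Fin n) ℝ, -(ν * ‖B‖) ≤ frobInner H B := by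
    intro B
    have h1 : frobInner H B = ∑ i, ⟪mv H (v i), mv B (v i)⟫ := frob_eq_sum_inner H B v
    calc -(ν * ‖B‖) = ∑ i, -(σ i * ‖B‖) := by
          rw [hν, Finset.sum_mul, ← Finset.sum_neg_distrib]
      _ ≤ ∑ i, ⟪mv H (v i), mv B (v i)⟫ := Finset.sum_le_sum (fun i _ => hterm B i)
      _ = frobInner H B := h1.symm
  have hmin : ∀ B, -(ν * t) + lam / 2 * t ^ 2 ≤ f B := by
    intro B
    have h1 := hfrob_low B
    have h2 : -(ν * t) + lam / 2 * t ^ 2 ≤ -(ν * ‖B‖) + lam / 2 * ‖B‖ ^ 2 := by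
      nlinarith [sq_nonneg (‖B‖ - t)]
    have h3 : matrixSpectralNorm B = ‖B‖ := rfl
    rw [hf]; simp only [h3]
    linarith
  -- candidate minimizer A₀
  set A₀ : Matrix (Fin m) (Fin n) ℝ :=
    ∑ i, (-t) • Matrix.of (fun a b => u i a * (v i : EuclideanSpace ℝ (Fin n)) b) with hA₀
  have hmv_rank1 : ∀ (y : EuclideanSpace ℝ (Fin m)) (z x : EuclideanSpace ℝ (Fin n)),
      mv (Matrix.of fun a b => y a * z b) x = ⟪z, x⟫ • y := by
    intro y z x
    ext a
    rw [mv_apply]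
    have h1 : (⟪z, x⟫ • y) a = ⟪z, x⟫ * y a := rfl
    rw [h1, inner_eq, Finset.sum_mul]
    exact Finset.sum_congr rfl fun b _ => by simp only [Matrix.of_apply]; ring
  have hA₀x : ∀ x, mv A₀ x
      = ∑ i, (⟪(v i : EuclideanSpace ℝ (Fin n)), x⟫ * (-t)) • u i := by
    intro x
    rw [hA₀, mv_sum]
    refine Finset.sum_congr rfl fun i _ => ?_
    rw [mv_smul, hmv_rank1, smul_smul, mul_comm]
  have hA₀v : ∀ j, mv A₀ (v j) = (-t) • u j := by
    intro j
    rw [hA₀x]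
    rw [Finset.sum_eq_single j]
    · rw [hvv]; simp
    · intro i _ hij; rw [hvv]; simp [hij]
    · simp
  have hsum_u : ∀ c : Fin n → ℝ, ‖∑ i, c i • u i‖ ^ 2 = ∑ i, e i * c i ^ 2 := by
    intro c
    rw [← real_inner_self_eq_norm_sq, sum_inner]
    refine Finset.sum_congr rfl fun i _ => ?_
    rw [real_inner_smul_left, inner_sum]
    rw [Finset.sum_eq_single i]
    · rw [real_inner_smul_right, huu]; simp; ring
    · intro j _ hji; rw [real_inner_smul_right, huu]
      rw [if_neg (Ne.symm hji)]; ring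
    · simp
  have hA₀norm_le : ‖A₀‖ ≤ t := by
    refine opNorm_le_of_forall (le_of_lt htpos) (fun x => ?_)
    have h1 : ‖mv A₀ x‖ ^ 2
        = ∑ i, e i * (⟪(v i : EuclideanSpace ℝ (Fin n)), x⟫ * (-t)) ^ 2 := by
      rw [hA₀x, hsum_u]
    have h2 : ‖mv A₀ x‖ ^ 2 ≤ t ^ 2 * ‖x‖ ^ 2 := by
      rw [h1, ← parseval v x, Finset.mul_sum]
      refine Finset.sum_le_sum fun i _ => ?_
      rcases he01 i with h | h <;> rw [h] <;>
        nlinarith [sq_nonneg (⟪(v i : EuclideanSpace ℝ (Fin n)), x⟫)]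
    have hnn : 0 ≤ t * ‖x‖ := mul_nonneg (le_of_lt htpos) (norm_nonneg x)
    nlinarith [norm_nonneg (mv A₀ x)]
  have hu_i₀ : ‖u i₀‖ = 1 := by
    have h1 : ‖u i₀‖ ^ 2 = 1 := by rw [hue i₀, he]; simp [hi₀]
    nlinarith [norm_nonneg (u i₀)]
  have hA₀norm : ‖A₀‖ = t := by
    refine le_antisymm hA₀norm_le ?_
    have h1 : ‖mv A₀ (v i₀)‖ = t := by
      rw [hA₀v, norm_smul]; simp [hu_i₀, abs_of_pos htpos]
    have h2 := mv_norm_le A₀ (v i₀)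
    rw [h1, hnv i₀, mul_one] at h2
    exact h2
  have hfrobA₀ : frobInner H A₀ = -(ν * t) := by
    rw [show frobInner H A₀ = (Hᵀ * A₀).trace from rfl, frob_eq_sum_inner H A₀ v]
    have h1 : ∀ i, ⟪mv H (v i), mv A₀ (v i)⟫ = -(σ i * t) := by
      intro i
      rw [hA₀v, hHvu i, real_inner_smul_left, real_inner_smul_right, huu]
      rw [if_pos rfl]
      linear_combination (-t) * hσe i
    rw [Finset.sum_congr rfl (fun i _ => h1 i)]
    rw [hν, Finset.sum_mul, ← Finset.sum_neg_distrib]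
  have hfA₀ : f A₀ = -(ν * t) + lam / 2 * t ^ 2 := by
    rw [hf]; simp only
    rw [hfrobA₀, show matrixSpectralNorm A₀ = ‖A₀‖ from rfl, hA₀norm]
  have hA₀min : ∀ B, f A₀ ≤ f B := by intro B; rw [hfA₀]; exact hmin B
  constructor
  · -- uniqueness implies full rank
    intro hEU
    by_contra hne
    have hlt : H.rank < n := lt_of_le_of_ne (Matrix.rank_le_width H) hne
    have hjex : ∃ j, μ j = 0 := by
      by_contra hco
      push_neg at hco
      have hcard : Fintype.card {i // μ i ≠ 0} = n := by
        rw [Fintype.card_congr (Equiv.subtypeUnivEquiv hco), Fintype.card_fin]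
      rw [hrank, hcard] at hlt
      exact lt_irrefl _ hlt
    obtain ⟨j, hj⟩ := hjex
    set P : Finset (Fin n) := Finset.univ.filter (fun i => μ i ≠ 0) with hP
    have hPcard : P.card < m := by
      have h1 : Fintype.card {i // μ i ≠ 0} = P.card := Fintype.card_subtype _
      have h2 : P.card < n := by rw [← h1, ← hrank]; exact hlt
      omega
    set Sfin : Finset (EuclideanSpace ℝ (Fin m)) := P.image (fun i => mv H (v i)) with hSfin
    set U : Submodule ℝ (EuclideanSpace ℝ (Fin m)) := Submodule.span ℝ (Sfin : Set _) with hU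
    have hUne : U ≠ ⊤ := by
      intro htop
      have h1 : Module.finrank ℝ U ≤ Sfin.card := finrank_span_finset_le_card Sfin
      have h2 : Sfin.card ≤ P.card := Finset.card_image_le
      have h3 : Module.finrank ℝ (EuclideanSpace ℝ (Fin m)) = m := finrank_euclideanSpace_fin
      rw [htop, finrank_top] at h1
      omega
    have hbot : Uᗮ ≠ ⊥ := fun h => hUne ((Submodule.orthogonal_eq_bot_iff).mp h)
    obtain ⟨w', hw'U, hw'0⟩ := (Submodule.ne_bot_iff _).mp hbot
    set w : EuclideanSpace ℝ (Fin m) := ‖w'‖⁻¹ • w' with hw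
    have hwnorm : ‖w‖ = 1 := by
      rw [hw, norm_smul, norm_inv, norm_norm, inv_mul_cancel₀ (norm_ne_zero_iff.mpr hw'0)]
    have hwU : w ∈ Uᗮ := Submodule.smul_mem _ _ hw'U
    have hworth : ∀ i, ⟪mv H (v i), w⟫ = 0 := by
      intro i
      by_cases h : μ i = 0
      · rw [hHv0 i h]; exact inner_zero_left _
      · refine Submodule.inner_right_of_mem_orthogonal ?_ hwU
        apply Submodule.subset_span
        rw [hSfin]
        simp only [Finset.coe_image, Set.mem_image, Finset.mem_coe, hP, Finset.mem_filter]
        exact ⟨i, ⟨Finset.mem_univ i, h⟩, rfl⟩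
    have hworth_u : ∀ i, ⟪u i, w⟫ = 0 := by
      intro i
      rw [hu]; simp only
      rw [real_inner_smul_left, hworth i, mul_zero]
    set A₁ : Matrix (Fin m) (Fin n) ℝ :=
      A₀ + (-t) • Matrix.of (fun a b => w a * (v j : EuclideanSpace ℝ (Fin n)) b) with hA₁
    have hA₁x : ∀ x, mv A₁ x
        = mv A₀ x + (⟪(v j : EuclideanSpace ℝ (Fin n)), x⟫ * (-t)) • w := by
      intro x
      rw [hA₁, mv_add, mv_smul, hmv_rank1, smul_smul, mul_comm]
    have huj : u j = 0 := by rw [hu]; simp only; rw [hHv0 j hj]; simp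
    have hA₁vj : mv A₁ (v j) = (-t) • w := by
      rw [hA₁x, hvv, hA₀v, huj]
      simp
    have hfrobA₁ : frobInner H A₁ = frobInner H A₀ := by
      rw [show frobInner H A₁ = (Hᵀ * A₁).trace from rfl,
        show frobInner H A₀ = (Hᵀ * A₀).trace from rfl,
        frob_eq_sum_inner H A₁ v, frob_eq_sum_inner H A₀ v]
      refine Finset.sum_congr rfl fun i _ => ?_
      rw [hA₁x, inner_add_right, real_inner_smul_right, hworth i]
      ring
    have hA₁norm_le : ‖A₁‖ ≤ t := by
      refine opNorm_le_of_forall (le_of_lt htpos) (fun x => ?_)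
      set q : Fin n → ℝ := fun i => (⟪(v i : EuclideanSpace ℝ (Fin n)), x⟫ * (-t)) ^ 2 with hq
      have hq0 : ∀ i, 0 ≤ q i := fun i => sq_nonneg _
      have hcross : ⟪mv A₀ x, (⟪(v j : EuclideanSpace ℝ (Fin n)), x⟫ * (-t)) • w⟫ = 0 := by
        rw [real_inner_smul_right, hA₀x, sum_inner]
        have : ∀ i ∈ Finset.univ, ⟪(⟪(v i : EuclideanSpace ℝ (Fin n)), x⟫ * (-t)) • u i, w⟫
            = 0 := by
          intro i _
          rw [real_inner_smul_left, hworth_u i, mul_zero]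
        rw [Finset.sum_congr rfl this]
        simp
      have h1 : ‖mv A₁ x‖ ^ 2 = ∑ i, e i * q i + q j := by
        rw [hA₁x, norm_add_sq_real, hcross, hA₀x, hsum_u, norm_smul, hwnorm, mul_one,
          Real.norm_eq_abs, sq_abs]
        simp only [hq]
        ring
      have h2 : ∑ i, e i * q i + q j ≤ ∑ i, q i := by
        have hstep : ∑ i, e i * q i + q j
            = ∑ i, (e i * q i + if i = j then q j else 0) := by
          rw [Finset.sum_add_distrib, Finset.sum_ite_eq' Finset.univ j]
          simp
        rw [hstep]
        refine Finset.sum_le_sum fun i _ => ?_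
        by_cases hij : i = j
        · subst hij
          have hej : e i = 0 := by rw [he]; simp [hj]
          rw [hej, if_pos rfl]; simp
        · rw [if_neg hij]
          rcases he01 i with h | h <;> rw [h] <;> simp [hq0 i]
      have h3 : ∑ i, q i = t ^ 2 * ‖x‖ ^ 2 := by
        rw [← parseval v x, Finset.mul_sum]
        refine Finset.sum_congr rfl fun i _ => ?_
        rw [hq]; ring
      have h4 : ‖mv A₁ x‖ ^ 2 ≤ (t * ‖x‖) ^ 2 := by
        rw [h1]
        calc ∑ i, e i * q i + q j ≤ ∑ i, q i := h2
          _ = t ^ 2 * ‖x‖ ^ 2 := h3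
          _ = (t * ‖x‖) ^ 2 := by ring
      have hnn : 0 ≤ t * ‖x‖ := mul_nonneg (le_of_lt htpos) (norm_nonneg x)
      nlinarith [norm_nonneg (mv A₁ x)]
    have hA₁norm : ‖A₁‖ = t := by
      refine le_antisymm hA₁norm_le ?_
      have h1 : ‖mv A₁ (v j)‖ = t := by
        rw [hA₁vj, norm_smul, hwnorm]; simp [abs_of_pos htpos]
      have h2 := mv_norm_le A₁ (v j)
      rw [h1, hnv j, mul_one] at h2
      exact h2
    have hfA₁ : f A₁ = -(ν * t) + lam / 2 * t ^ 2 := by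
      rw [hf]; simp only
      rw [hfrobA₁, hfrobA₀, show matrixSpectralNorm A₁ = ‖A₁‖ from rfl, hA₁norm]
    have hA₁min : ∀ B, f A₁ ≤ f B := by intro B; rw [hfA₁]; exact hmin B
    obtain ⟨B, _, hBu⟩ := hEU
    have e1 : A₀ = B := hBu A₀ hA₀min
    have e2 : A₁ = B := hBu A₁ hA₁min
    have e3 : mv A₀ (v j) = mv A₁ (v j) := by rw [e1, e2]
    rw [hA₀v j, huj, hA₁vj] at e3
    have hwne : w ≠ 0 := by
      intro h; rw [h, norm_zero] at hwnorm; exact one_ne_zero hwnorm.symm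
    apply hwne
    have : (-t) • w = 0 := by rw [← e3]; simp
    exact (smul_eq_zero.mp this).resolve_left (by simpa using ne_of_gt htpos)
  · -- full rank implies uniqueness
    intro hr
    have hall : ∀ i, μ i ≠ 0 := by
      intro i hzero
      have h1 := Fintype.card_subtype_lt (p := fun i => μ i ≠ 0) (x := i) (by simp [hzero])
      rw [← hrank, hr, Fintype.card_fin] at h1
      exact lt_irrefl _ h1
    refine ⟨A₀, hA₀min, ?_⟩
    intro B hB
    have hfeq : f B = f A₀ := le_antisymm (hB A₀) (hA₀min B)
    set c : Fin n → ℝ := fun i => ⟪mv H (v i), mv B (v i)⟫ with hc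
    have hsum_c : ∑ i, c i = frobInner H B := (frob_eq_sum_inner H B v).symm
    have hcB : frobInner H B + lam / 2 * ‖B‖ ^ 2 = -(ν * t) + lam / 2 * t ^ 2 := by
      have := hfeq
      rw [hfA₀] at this
      rw [← this, hf]
      rfl
    have hsle : -(ν * ‖B‖) ≤ frobInner H B := hfrob_low B
    have hst : ‖B‖ = t := by
      have h1 : lam / 2 * (‖B‖ - t) ^ 2 ≤ 0 := by nlinarith [norm_nonneg B]
      have h2 : (‖B‖ - t) ^ 2 = 0 := le_antisymm (by nlinarith) (sq_nonneg _)
      have h3 : ‖B‖ - t = 0 := pow_eq_zero_iff (n := 2) (by norm_num) |>.mp h2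
      linarith
    have hceq : ∀ i, c i = -(σ i * t) := by
      have hsum : ∑ i, -(σ i * t) = ∑ i, c i := by
        rw [hsum_c]
        have : frobInner H B = -(ν * t) := by rw [hst] at hcB; linarith
        rw [this, hν, Finset.sum_mul, ← Finset.sum_neg_distrib]
      have hle : ∀ i ∈ Finset.univ, -(σ i * t) ≤ c i := fun i _ => by
        have := hterm B i; rwa [hst] at this
      intro i
      exact ((Finset.sum_eq_sum_iff_of_le hle).mp hsum i (Finset.mem_univ i)).symm
    have hBv : ∀ i, mv B (v i) = mv A₀ (v i) := by
      intro i
      have hσpos : 0 < σ i := Real.sqrt_pos.mpr ((hμ0 i).lt_of_ne (Ne.symm (hall i)))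
      have hBvn : ‖mv B (v i)‖ ≤ t := by
        have h := mv_norm_le B (v i)
        rw [hnv i, mul_one, hst] at h
        exact h
      have hci : ⟪mv B (v i), mv H (v i)⟫ = -(σ i * t) := by
        rw [real_inner_comm]; exact hceq i
      have hzero2 : ‖σ i • mv B (v i) + t • mv H (v i)‖ ^ 2 ≤ 0 := by
        rw [norm_add_sq_real, real_inner_smul_left, real_inner_smul_right,
          norm_smul, norm_smul, hci, hHv_norm i, Real.norm_eq_abs, Real.norm_eq_abs]
        rw [abs_of_nonneg (hσ0 i), abs_of_pos htpos]
        nlinarith [norm_nonneg (mv B (v i)), sq_nonneg (σ i), hBvn,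
          mul_le_mul hBvn hBvn (norm_nonneg _) (le_of_lt htpos)]
      have hzero3 : σ i • mv B (v i) + t • mv H (v i) = 0 := by
        have h1 := sq_nonneg ‖σ i • mv B (v i) + t • mv H (v i)‖
        have h2 : ‖σ i • mv B (v i) + t • mv H (v i)‖ = 0 := by
          nlinarith [norm_nonneg (σ i • mv B (v i) + t • mv H (v i))]
        exact norm_eq_zero.mp h2
      have h4 : σ i • mv B (v i) = -(t • mv H (v i)) := by
        rw [add_eq_zero_iff_eq_neg] at hzero3; exact hzero3
      have h5 : mv B (v i) = (-t) • u i := by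
        rw [hu]; simp only
        rw [smul_smul]
        have hσne : σ i ≠ 0 := ne_of_gt hσpos
        have h6 : (σ i)⁻¹ • (σ i • mv B (v i)) = (σ i)⁻¹ • -(t • mv H (v i)) := by rw [h4]
        rw [inv_smul_smul₀ hσne] at h6
        rw [h6, smul_neg, smul_smul]
        rw [show (-t : ℝ) * (σ i)⁻¹ = -((σ i)⁻¹ * t) by ring, neg_smul]
      rw [h5, hA₀v i]
    exact matrix_ext_of_mv_basis v hBv


set_option maxHeartbeats 800000 in
/-- For `G ≠ 0`, `S` diagonal with strictly positive entries and `λ > 0`, the functional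
`ΔW ↦ ⟨G, ΔW⟩_F + (λ/2) ‖ΔW S⁻¹‖₂²` has a unique global minimizer
if and only if `G` has full column rank `n`. -/
theorem stmt_2 {m n : ℕ} (hmn : n ≤ m) (G : Matrix (Fin m) (Fin n) ℝ)
    (hG0 : G ≠ 0) (d : Fin n → ℝ) (hd : ∀ i, 0 < d i) (lam : ℝ) (hlam : 0 < lam) :
    let S : Matrix (Fin n) (Fin n) ℝ := Matrix.diagonal d
    ((∃! W : Matrix (Fin m) (Fin n) ℝ, ∀ W' : Matrix (Fin m) (Fin n) ℝ,
        frobInner G W + lam / 2 * matrixSpectralNorm (W * S⁻¹) ^ 2 ≤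
          frobInner G W' + lam / 2 * matrixSpectralNorm (W' * S⁻¹) ^ 2) ↔
      G.rank = n) := by
  intro S
  have hdet : IsUnit S.det := by
    rw [Matrix.det_diagonal]
    exact isUnit_iff_ne_zero.mpr (ne_of_gt (Finset.prod_pos fun i _ => hd i))
  have hS1 : S * S⁻¹ = 1 := Matrix.mul_nonsing_inv S hdet
  have hS2 : S⁻¹ * S = 1 := Matrix.nonsing_inv_mul S hdet
  have hcancel : ∀ V : Matrix (Fin m) (Fin n) ℝ, V * S * S⁻¹ = V := by
    intro V; rw [Matrix.mul_assoc, hS1, Matrix.mul_one]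
  have hcancel2 : ∀ W : Matrix (Fin m) (Fin n) ℝ, W * S⁻¹ * S = W := by
    intro W; rw [Matrix.mul_assoc, hS2, Matrix.mul_one]
  have hGS0 : G * S ≠ 0 := by
    intro h
    apply hG0
    calc G = G * S * S⁻¹ := (hcancel G).symm
      _ = (0 : Matrix (Fin m) (Fin n) ℝ) * S⁻¹ := by rw [h]
      _ = 0 := Matrix.zero_mul _
  have hST : Sᵀ = S := Matrix.diagonal_transpose d
  have hfrob : ∀ W : Matrix (Fin m) (Fin n) ℝ,
      frobInner G W = frobInner (G * S) (W * S⁻¹) := by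
    intro W
    show (Gᵀ * W).trace = ((G * S)ᵀ * (W * S⁻¹)).trace
    rw [Matrix.transpose_mul]
    calc (Gᵀ * W).trace = (Gᵀ * (W * S⁻¹ * S)).trace := by rw [hcancel2]
      _ = ((Gᵀ * (W * S⁻¹)) * S).trace := by rw [← Matrix.mul_assoc]
      _ = (S * (Gᵀ * (W * S⁻¹))).trace := Matrix.trace_mul_comm _ _
      _ = ((Sᵀ * Gᵀ) * (W * S⁻¹)).trace := by rw [hST, Matrix.mul_assoc]
  have hrk : (G * S).rank = G.rank := Matrix.rank_mul_eq_left_of_isUnit_det S G hdet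
  set F : Matrix (Fin m) (Fin n) ℝ → ℝ :=
    fun W => frobInner G W + lam / 2 * matrixSpectralNorm (W * S⁻¹) ^ 2 with hF
  set Q : Matrix (Fin m) (Fin n) ℝ → ℝ :=
    fun V => frobInner (G * S) V + lam / 2 * matrixSpectralNorm V ^ 2 with hQ
  have hFQ : ∀ W, F W = Q (W * S⁻¹) := by
    intro W
    rw [hF, hQ]
    simp only
    rw [hfrob W]
  have hQF : ∀ V, Q V = F (V * S) := by
    intro V
    rw [hFQ (V * S), hcancel V]
  have equiv1 : (∃! W : Matrix (Fin m) (Fin n) ℝ, ∀ W', F W ≤ F W') ↔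
      (∃! V : Matrix (Fin m) (Fin n) ℝ, ∀ V', Q V ≤ Q V') := by
    constructor
    · rintro ⟨W, hW, hWu⟩
      refine ⟨W * S⁻¹, ?_, ?_⟩
      · intro V'
        rw [← hFQ W, hQF V']
        exact hW (V' * S)
      · intro V hV
        have hVS : ∀ W', F (V * S) ≤ F W' := by
          intro W'
          rw [← hQF V, hFQ W']
          exact hV (W' * S⁻¹)
        rw [← hWu (V * S) hVS, hcancel V]
    · rintro ⟨V, hV, hVu⟩
      refine ⟨V * S, ?_, ?_⟩
      · intro W'
        rw [← hQF V, hFQ W']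
        exact hV (W' * S⁻¹)
      · intro W hW
        have hWS : ∀ V', Q (W * S⁻¹) ≤ Q V' := by
          intro V'
          rw [← hFQ W, hQF V']
          exact hW (V' * S)
        rw [← hVu (W * S⁻¹) hWS, hcancel2 W]
  refine equiv1.trans ?_
  have := SpecAux.core hmn (G * S) hGS0 lam hlam
  rw [hrk] at this
  exact this
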